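/- For every integer n ≥ 1, every integer e ≥ 1, and every j with 1 ≤ j ≤ n, the (1,j) entry of the e-th power of the matrix R_n equals C(n-1, j-1) · F_{e-1}^{n-j} · F_e^{j-1}, where C denotes the binomial coefficient (and 0^0 = 1). -/

import Mathlib

/-- `R n` is the `n × n` integer matrix whose `(i,j)` entry (1-based) is
`C(i-1, n-j)`; with 0-based indices the entry is `C(i, n-1-j)`. -/
def binR (n : ℕ) : Matrix (Fin n) (Fin n) ℤ :=
  fun i j => (Nat.choose i (n - 1 - j) : ℤ)

lemma key_sum (a b : ℤ) (m t : ℕ) (ht : t ≤ m) :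
    ∑ k ∈ Finset.range (m + 1),
      (Nat.choose m k : ℤ) * a ^ (m - k) * b ^ k * (Nat.choose k t : ℤ)
      = (Nat.choose m t : ℤ) * b ^ t * (a + b) ^ (m - t) := by
  have hsplit : m + 1 = t + (m - t + 1) := by omega
  rw [hsplit, Finset.sum_range_add]
  have h1 : ∑ i ∈ Finset.range t,
      (Nat.choose m i : ℤ) * a ^ (m - i) * b ^ i * (Nat.choose i t : ℤ) = 0 := by
    apply Finset.sum_eq_zero
    intro i hi
    rw [Finset.mem_range] at hi
    rw [Nat.choose_eq_zero_of_lt hi]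
    simp
  rw [h1, zero_add]
  have h2 : ∀ i ∈ Finset.range (m - t + 1),
      (Nat.choose m (t + i) : ℤ) * a ^ (m - (t + i)) * b ^ (t + i) *
          (Nat.choose (t + i) t : ℤ)
        = (Nat.choose m t : ℤ) * b ^ t *
            ((Nat.choose (m - t) i : ℤ) * a ^ (m - t - i) * b ^ i) := by
    intro i hi
    rw [Finset.mem_range] at hi
    have h3 : Nat.choose m (t + i) * Nat.choose (t + i) t
        = Nat.choose m t * Nat.choose (m - t) i := by
      have := Nat.choose_mul (n := m) (k := t + i) (s := t) (by omega)
      simpa using this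
    have h4 : m - (t + i) = m - t - i := by omega
    have h5 : (Nat.choose m (t + i) : ℤ) * (Nat.choose (t + i) t : ℤ)
        = (Nat.choose m t : ℤ) * (Nat.choose (m - t) i : ℤ) := by exact_mod_cast h3
    rw [h4, pow_add]
    linear_combination a ^ (m - t - i) * b ^ t * b ^ i * h5
  rw [Finset.sum_congr rfl h2, ← Finset.mul_sum]
  congr 1
  rw [add_comm a b, add_pow]
  apply Finset.sum_congr rfl
  intro i hi
  ring

lemma row0 (n : ℕ) (hn : 1 ≤ n) (e : ℕ) (he : 1 ≤ e) (j : Fin n) :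
    (binR n ^ e) ⟨0, by omega⟩ j
      = (Nat.choose (n - 1) j : ℤ) * (Nat.fib (e - 1) : ℤ) ^ (n - 1 - j) *
          (Nat.fib e : ℤ) ^ (j : ℕ) := by
  induction e, he using Nat.le_induction generalizing j with
  | base =>
    have hjn : (j : ℕ) < n := j.isLt
    rw [pow_one]
    by_cases hj : (j : ℕ) = n - 1
    · have h0 : n - 1 - (j : ℕ) = 0 := by omega
      simp [binR, h0, hj]
    · have h0 : 0 < n - 1 - (j : ℕ) := by omega
      have hc : Nat.choose 0 (n - 1 - (j : ℕ)) = 0 := Nat.choose_eq_zero_of_lt h0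
      simp [binR, hc, zero_pow h0.ne']
  | succ e he ih =>
    rw [pow_succ, Matrix.mul_apply]
    have hrow : ∀ k : Fin n, (binR n ^ e) ⟨0, by omega⟩ k * binR n k j
        = (Nat.choose (n - 1) k : ℤ) * (Nat.fib (e - 1) : ℤ) ^ (n - 1 - k) *
            (Nat.fib e : ℤ) ^ (k : ℕ) * (Nat.choose k (n - 1 - j) : ℤ) := by
      intro k; rw [ih k]; rfl
    rw [Finset.sum_congr rfl fun k _ => hrow k]
    rw [Fin.sum_univ_eq_sum_range (fun k =>
      (Nat.choose (n - 1) k : ℤ) * (Nat.fib (e - 1) : ℤ) ^ (n - 1 - k) *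
        (Nat.fib e : ℤ) ^ k * (Nat.choose k (n - 1 - (j : ℕ)) : ℤ)) n]
    have hr : Finset.range n = Finset.range (n - 1 + 1) := by
      rw [Nat.sub_add_cancel hn]
    rw [hr, key_sum _ _ _ _ (by omega)]
    have h1 : n - 1 - (n - 1 - (j : ℕ)) = j := by
      have := j.isLt; omega
    have h2 : Nat.choose (n - 1) (n - 1 - (j : ℕ)) = Nat.choose (n - 1) j :=
      Nat.choose_symm (by have := j.isLt; omega)
    have h3 : Nat.fib (e - 1) + Nat.fib e = Nat.fib (e + 1) := by
      have h := Nat.fib_add_two (n := e - 1)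
      rw [show e - 1 + 2 = e + 1 by omega, show e - 1 + 1 = e by omega] at h
      omega
    have h3' : (Nat.fib (e - 1) : ℤ) + Nat.fib e = Nat.fib (e + 1) := by
      exact_mod_cast h3
    rw [h1, h2, h3', show e + 1 - 1 = e from rfl]

theorem stmt_0 (n e : ℕ) (hn : 1 ≤ n) (he : 1 ≤ e)
    (j : ℕ) (hj1 : 1 ≤ j) (hj2 : j ≤ n) :
    (binR n ^ e) ⟨0, by omega⟩ ⟨j - 1, by omega⟩ =
      (Nat.choose (n - 1) (j - 1) : ℤ) *
        (Nat.fib (e - 1) : ℤ) ^ (n - j) * (Nat.fib e : ℤ) ^ (j - 1) := by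
  have h := row0 n hn e he ⟨j - 1, by omega⟩
  simpa [show n - 1 - (j - 1) = n - j by omega] using h
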